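/- Let a < b, let s ∈ (0,1), let φ : [a,b] → [a,b] be an affine continuous map with φ(a) < φ(b), let g : [a,b] → [0,∞) be φ_s-convex and Lebesgue integrable, and let f : [a,b] → [0,∞) be Lebesgue integrable and (g,φ_s)-convex dominated on [a,b] (i.e. (g,φ_h)-convex dominated with h(t) = t^s). Then |(1/(φ(b) − φ(a))) ∫_{φ(a)}^{φ(b)} f(x) dx − 2^{s−1} f((φ(a) + φ(b))/2)| ≤ (1/(φ(b) − φ(a))) ∫_{φ(a)}^{φ(b)} g(x) dx − 2^{s−1} g((φ(a) + φ(b))/2). -/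

import Mathlib

open MeasureTheory Set

lemma comp_affine_intervalIntegrable {f : ℝ → ℝ} {c d u v : ℝ} (hc : c ≠ 0)
    (h : IntervalIntegrable f volume (c * u + d) (c * v + d)) :
    IntervalIntegrable (fun t => f (c * t + d)) volume u v := by
  have h2 := (h.comp_add_right d).comp_mul_left (c := c)
  have eu : (c * u + d - d) / c = u := by field_simp; ring
  have ev : (c * v + d - d) / c = v := by field_simp; ring
  rwa [eu, ev] at h2

/-- `F` is `φ_h`-convex on `I`. -/
def PhiHConvexOn (I : Set ℝ) (h φ F : ℝ → ℝ) : Prop :=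
  ∀ x ∈ I, ∀ y ∈ I, ∀ t ∈ Set.Ioo (0:ℝ) 1,
    F (t * φ x + (1 - t) * φ y) ≤ h t * F (φ x) + h (1 - t) * F (φ y)

/-- `f` is `(g, φ_h)`-convex dominated on `I`. -/
def GPhiHConvexDominated (I : Set ℝ) (h φ g f : ℝ → ℝ) : Prop :=
  ∀ x ∈ I, ∀ y ∈ I, ∀ t ∈ Set.Ioo (0:ℝ) 1,
    |h t * f (φ x) + h (1 - t) * f (φ y) - f (t * φ x + (1 - t) * φ y)| ≤
      h t * g (φ x) + h (1 - t) * g (φ y) - g (t * φ x + (1 - t) * φ y)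

theorem stmt6 (a b : ℝ) (hab : a < b) (s : ℝ) (hs : s ∈ Set.Ioo (0:ℝ) 1)
    (φ f g : ℝ → ℝ)
    (hφmaps : Set.MapsTo φ (Set.Icc a b) (Set.Icc a b))
    (hφaff : ∀ x ∈ Set.Icc a b, ∀ y ∈ Set.Icc a b, ∀ l ∈ Set.Icc (0:ℝ) 1,
      φ (l * x + (1 - l) * y) = l * φ x + (1 - l) * φ y)
    (hφcont : ContinuousOn φ (Set.Icc a b))
    (hφab : φ a < φ b)
    (hg0 : ∀ x ∈ Set.Icc a b, 0 ≤ g x)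
    (hgconv : PhiHConvexOn (Set.Icc a b) (fun t => t ^ s) φ g)
    (hgint : IntegrableOn g (Set.Icc a b))
    (hf0 : ∀ x ∈ Set.Icc a b, 0 ≤ f x)
    (hfint : IntegrableOn f (Set.Icc a b))
    (hfdom : GPhiHConvexDominated (Set.Icc a b) (fun t => t ^ s) φ g f) :
    |(1 / (φ b - φ a)) * ∫ x in φ a..φ b, f x -
        (2:ℝ) ^ (s - 1) * f ((φ a + φ b) / 2)| ≤
      (1 / (φ b - φ a)) * ∫ x in φ a..φ b, g x -
        (2:ℝ) ^ (s - 1) * g ((φ a + φ b) / 2) := by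
  obtain ⟨hs0, hs1⟩ := hs
  set m : ℝ := (φ a + φ b) / 2 with hm
  set k : ℝ := (2:ℝ) ^ (s - 1) with hkdef
  have ha : a ∈ Icc a b := ⟨le_rfl, hab.le⟩
  have hb : b ∈ Icc a b := ⟨hab.le, le_rfl⟩
  have hφa := hφmaps ha
  have hφb := hφmaps hb
  have hc : φ b - φ a ≠ 0 := sub_ne_zero.2 hφab.ne'
  have hc' : φ a - φ b ≠ 0 := sub_ne_zero.2 hφab.ne
  have hsub : Set.uIcc (φ a) (φ b) ⊆ Icc a b := by
    rw [uIcc_of_le hφab.le]; exact Icc_subset_Icc hφa.1 hφb.2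
  have hfI : IntervalIntegrable f volume (φ a) (φ b) :=
    (hfint.mono_set hsub).intervalIntegrable
  have hgI : IntervalIntegrable g volume (φ a) (φ b) :=
    (hgint.mono_set hsub).intervalIntegrable
  have hkpos : (0:ℝ) < k := Real.rpow_pos_of_pos (by norm_num) _
  have hk : k * (1/2:ℝ) ^ s = 1/2 := by
    have h1 : ((1:ℝ)/2) ^ s = (2:ℝ) ^ (-s) := by
      rw [Real.rpow_neg (by norm_num), ← Real.inv_rpow (by norm_num)]; norm_num
    rw [hkdef, h1, ← Real.rpow_add (by norm_num), show s - 1 + -s = -1 by ring,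
      Real.rpow_neg_one]
    norm_num
  -- pointwise inequality
  have hpt : ∀ t ∈ Icc (0:ℝ) 1,
      |(f ((φ a - φ b) * t + φ b) + f ((φ b - φ a) * t + φ a)) / 2 - k * f m| ≤
       (g ((φ a - φ b) * t + φ b) + g ((φ b - φ a) * t + φ a)) / 2 - k * g m := by
    intro t ht
    obtain ⟨ht0, ht1⟩ := ht
    set x := t * a + (1 - t) * b with hxdef
    set y := (1 - t) * a + t * b with hydef
    have hx : x ∈ Icc a b := ⟨by nlinarith, by nlinarith⟩
    have hy : y ∈ Icc a b := ⟨by nlinarith, by nlinarith⟩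
    have hφx : φ x = t * φ a + (1 - t) * φ b := hφaff a ha b hb t ⟨ht0, ht1⟩
    have hφy : φ y = (1 - t) * φ a + t * φ b := by
      have h' := hφaff a ha b hb (1 - t) ⟨by linarith, by linarith⟩
      rw [show (1:ℝ) - (1 - t) = t by ring] at h'
      exact h'
    have hdom := hfdom x hx y hy (1/2) ⟨by norm_num, by norm_num⟩
    simp only [show (1:ℝ) - 1/2 = 1/2 by norm_num] at hdom
    have hmid : (1/2:ℝ) * φ x + (1/2:ℝ) * φ y = m := by rw [hφx, hφy, hm]; ring
    rw [hmid] at hdom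
    have harg1 : φ x = (φ a - φ b) * t + φ b := by rw [hφx]; ring
    have harg2 : φ y = (φ b - φ a) * t + φ a := by rw [hφy]; ring
    rw [harg1, harg2] at hdom
    have eA : k * ((1/2:ℝ) ^ s * f ((φ a - φ b) * t + φ b) +
        (1/2:ℝ) ^ s * f ((φ b - φ a) * t + φ a) - f m) =
        (f ((φ a - φ b) * t + φ b) + f ((φ b - φ a) * t + φ a)) / 2 - k * f m := by
      linear_combination (f ((φ a - φ b) * t + φ b) + f ((φ b - φ a) * t + φ a)) * hk
    have eB : k * ((1/2:ℝ) ^ s * g ((φ a - φ b) * t + φ b) +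
        (1/2:ℝ) ^ s * g ((φ b - φ a) * t + φ a) - g m) =
        (g ((φ a - φ b) * t + φ b) + g ((φ b - φ a) * t + φ a)) / 2 - k * g m := by
      linear_combination (g ((φ a - φ b) * t + φ b) + g ((φ b - φ a) * t + φ a)) * hk
    calc |(f ((φ a - φ b) * t + φ b) + f ((φ b - φ a) * t + φ a)) / 2 - k * f m|
        = k * |(1/2:ℝ) ^ s * f ((φ a - φ b) * t + φ b) +
            (1/2:ℝ) ^ s * f ((φ b - φ a) * t + φ a) - f m| := by
          rw [← eA, abs_mul, abs_of_pos hkpos]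
      _ ≤ k * ((1/2:ℝ) ^ s * g ((φ a - φ b) * t + φ b) +
            (1/2:ℝ) ^ s * g ((φ b - φ a) * t + φ a) - g m) :=
          mul_le_mul_of_nonneg_left hdom hkpos.le
      _ = _ := eB
  -- integrability of compositions on [0,1]
  have hF1 : IntervalIntegrable (fun t => f ((φ a - φ b) * t + φ b)) volume 0 1 := by
    apply comp_affine_intervalIntegrable hc'
    simpa using hfI.symm
  have hF2 : IntervalIntegrable (fun t => f ((φ b - φ a) * t + φ a)) volume 0 1 := by
    apply comp_affine_intervalIntegrable hc
    simpa using hfI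
  have hG1 : IntervalIntegrable (fun t => g ((φ a - φ b) * t + φ b)) volume 0 1 := by
    apply comp_affine_intervalIntegrable hc'
    simpa using hgI.symm
  have hG2 : IntervalIntegrable (fun t => g ((φ b - φ a) * t + φ a)) volume 0 1 := by
    apply comp_affine_intervalIntegrable hc
    simpa using hgI
  have hP : IntervalIntegrable
      (fun t => (f ((φ a - φ b) * t + φ b) + f ((φ b - φ a) * t + φ a)) / 2 - k * f m)
      volume 0 1 := ((hF1.add hF2).div_const 2).sub intervalIntegrable_const
  have hQ : IntervalIntegrable
      (fun t => (g ((φ a - φ b) * t + φ b) + g ((φ b - φ a) * t + φ a)) / 2 - k * g m)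
      volume 0 1 := ((hG1.add hG2).div_const 2).sub intervalIntegrable_const
  -- integral computations
  have e1 : ∫ t in (0:ℝ)..1, f ((φ a - φ b) * t + φ b) =
      (1 / (φ b - φ a)) * ∫ x in φ a..φ b, f x := by
    rw [intervalIntegral.integral_comp_mul_add f hc' (φ b)]
    simp only [mul_zero, zero_add, mul_one, smul_eq_mul]
    rw [show (φ a - φ b) + φ b = φ a by ring, intervalIntegral.integral_symm]
    field_simp
    ring
  have e2 : ∫ t in (0:ℝ)..1, f ((φ b - φ a) * t + φ a) =
      (1 / (φ b - φ a)) * ∫ x in φ a..φ b, f x := by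
    rw [intervalIntegral.integral_comp_mul_add f hc (φ a)]
    simp only [mul_zero, zero_add, mul_one, smul_eq_mul]
    rw [show (φ b - φ a) + φ a = φ b by ring, one_div]
  have e3 : ∫ t in (0:ℝ)..1, g ((φ a - φ b) * t + φ b) =
      (1 / (φ b - φ a)) * ∫ x in φ a..φ b, g x := by
    rw [intervalIntegral.integral_comp_mul_add g hc' (φ b)]
    simp only [mul_zero, zero_add, mul_one, smul_eq_mul]
    rw [show (φ a - φ b) + φ b = φ a by ring, intervalIntegral.integral_symm]
    field_simp
    ring
  have e4 : ∫ t in (0:ℝ)..1, g ((φ b - φ a) * t + φ a) =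
      (1 / (φ b - φ a)) * ∫ x in φ a..φ b, g x := by
    rw [intervalIntegral.integral_comp_mul_add g hc (φ a)]
    simp only [mul_zero, zero_add, mul_one, smul_eq_mul]
    rw [show (φ b - φ a) + φ a = φ b by ring, one_div]
  have eP : (∫ t in (0:ℝ)..1,
      ((f ((φ a - φ b) * t + φ b) + f ((φ b - φ a) * t + φ a)) / 2 - k * f m)) =
      (1 / (φ b - φ a)) * (∫ x in φ a..φ b, f x) - k * f m := by
    rw [intervalIntegral.integral_sub ((hF1.add hF2).div_const 2) intervalIntegrable_const,
      intervalIntegral.integral_div, intervalIntegral.integral_add hF1 hF2, e1, e2,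
      intervalIntegral.integral_const]
    simp
  have eQ : (∫ t in (0:ℝ)..1,
      ((g ((φ a - φ b) * t + φ b) + g ((φ b - φ a) * t + φ a)) / 2 - k * g m)) =
      (1 / (φ b - φ a)) * (∫ x in φ a..φ b, g x) - k * g m := by
    rw [intervalIntegral.integral_sub ((hG1.add hG2).div_const 2) intervalIntegrable_const,
      intervalIntegral.integral_div, intervalIntegral.integral_add hG1 hG2, e3, e4,
      intervalIntegral.integral_const]
    simp
  have goalf : (1 / (φ b - φ a)) * ∫ x in φ a..φ b, f x - k * f m
      = (1 / (φ b - φ a)) * (∫ x in φ a..φ b, f x) - k * f m := by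
    rw [intervalIntegral.integral_sub hfI intervalIntegrable_const,
      intervalIntegral.integral_const, smul_eq_mul, mul_sub]
    congr 1
    field_simp
  have goalg : (1 / (φ b - φ a)) * ∫ x in φ a..φ b, g x - k * g m
      = (1 / (φ b - φ a)) * (∫ x in φ a..φ b, g x) - k * g m := by
    rw [intervalIntegral.integral_sub hgI intervalIntegrable_const,
      intervalIntegral.integral_const, smul_eq_mul, mul_sub]
    congr 1
    field_simp
  rw [goalf, goalg]
  calc |(1 / (φ b - φ a)) * (∫ x in φ a..φ b, f x) - k * f m|
      = |∫ t in (0:ℝ)..1,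
          ((f ((φ a - φ b) * t + φ b) + f ((φ b - φ a) * t + φ a)) / 2 - k * f m)| := by
        rw [eP]
    _ ≤ ∫ t in (0:ℝ)..1,
          |(f ((φ a - φ b) * t + φ b) + f ((φ b - φ a) * t + φ a)) / 2 - k * f m| :=
        intervalIntegral.abs_integral_le_integral_abs (by norm_num)
    _ ≤ ∫ t in (0:ℝ)..1,
          ((g ((φ a - φ b) * t + φ b) + g ((φ b - φ a) * t + φ a)) / 2 - k * g m) :=
        intervalIntegral.integral_mono_on (by norm_num) hP.abs hQ hpt
    _ = (1 / (φ b - φ a)) * (∫ x in φ a..φ b, g x) - k * g m := eQ
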